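/- Let M be the 3×3 real matrix with rows (1,2,0), (1,0,2), (1,0,0), let λ be the unique real root of x³ − x² − 2x − 4, and let v = (λ − 2, (λ² − 4)/λ², (λ − 2)/λ). For every vector u : Fin 3 → ℝ with u i ≥ 0 for all i and u ≠ 0, there exists a real constant c > 0 such that the sequence k ↦ (1/λ^k) · (M^k · u) converges to c • v. -/

import Mathlib

private lemma sqrt_pow_aux (p : ℝ) (hp : 0 ≤ p) : ∀ k : ℕ, Real.sqrt (p ^ k) = Real.sqrt p ^ k
  | 0 => by simp
  | k + 1 => by
      rw [pow_succ, Real.sqrt_mul (by positivity), sqrt_pow_aux p hp k, pow_succ]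

set_option maxHeartbeats 1000000 in
/-- Convergence to the Perron–Frobenius eigenvector: with `M` the substitution
matrix, `l` its Perron–Frobenius eigenvalue (the unique real root of
`x³ − x² − 2x − 4`) and `v` the normalized right eigenvector, for every
nonnegative nonzero vector `u` there is `c > 0` with
`(1/l^k) • (M^k · u) → c • v`. -/
theorem stmt_14 (l : ℝ) (hl : l ^ 3 - l ^ 2 - 2 * l - 4 = 0) :
    let M : Matrix (Fin 3) (Fin 3) ℝ := !![1, 2, 0; 1, 0, 2; 1, 0, 0]
    let v : Fin 3 → ℝ := ![l - 2, (l ^ 2 - 4) / l ^ 2, (l - 2) / l]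
    ∀ u : Fin 3 → ℝ, (∀ i, 0 ≤ u i) → u ≠ 0 →
      ∃ c : ℝ, 0 < c ∧
        Filter.Tendsto (fun k : ℕ => (1 / l ^ k) • (M ^ k).mulVec u)
          Filter.atTop (nhds (c • v)) := by
  intro M v u hu hune
  have hM : M = !![1, 2, 0; 1, 0, 2; 1, 0, 0] := rfl
  have hv : v = ![l - 2, (l ^ 2 - 4) / l ^ 2, (l - 2) / l] := rfl
  -- bounds on l
  have h1 : 12/5 < l := by
    nlinarith [sq_nonneg (l-12/5), sq_nonneg (l+1), sq_nonneg l, sq_nonneg (l+2),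
      sq_nonneg (l-1), sq_nonneg (l*l - 2*l)]
  have h2 : l < 5/2 := by
    nlinarith [sq_nonneg (l-5/2), sq_nonneg (l+1), sq_nonneg l, sq_nonneg (l+2)]
  have hl0 : (0:ℝ) < l := by linarith
  have hlne : l ≠ 0 := ne_of_gt hl0
  set p : ℝ := l^2 - l - 2 with hp_def
  have hp : 0 < p := by nlinarith
  have hpl2 : p < l^2 := by nlinarith
  set q : ℝ := 3*l^2 - 2*l - 2 with hq_def
  have hq : 0 < q := by nlinarith
  have hqne : q ≠ 0 := ne_of_gt hq
  have hdisc : 0 < 4*p - (l-1)^2 := by nlinarith [sq_nonneg (l - 12/5)]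
  -- eigenvector and left eigenfunctional
  set e : Fin 3 → ℝ := ![l^2, l+2, l] with he_def
  set σ : (Fin 3 → ℝ) → ℝ := fun z => l^2 * z 0 + 2*l*z 1 + 4*z 2 with hσ_def
  set s : ℝ := σ u with hs_def
  have hs : 0 < s := by
    obtain ⟨i, hi⟩ := Function.ne_iff.mp hune
    have hi' : 0 < u i := lt_of_le_of_ne (hu i) (Ne.symm hi)
    have h00 := hu 0; have h11 := hu 1; have h22 := hu 2
    simp only [hs_def, hσ_def]
    have hi'' : 0 < u 0 ∨ 0 < u 1 ∨ 0 < u 2 := by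
      fin_cases i
      · exact Or.inl hi'
      · exact Or.inr (Or.inl hi')
      · exact Or.inr (Or.inr hi')
    rcases hi'' with h|h|h <;> nlinarith [sq_nonneg l]
  set a : ℝ := s / (l^2 * q) with ha_def
  set w : Fin 3 → ℝ := fun i => u i - a * e i with hw_def
  have hσe : σ e = l^2 * q := by
    simp only [hσ_def, he_def, hq_def]
    norm_num [Matrix.cons_val_zero, Matrix.cons_val_one, Matrix.head_cons, Matrix.cons_val_two, Matrix.tail_cons]
    linear_combination (-2*l) * hl
  have hσw : σ w = 0 := by
    have h1' : σ w = s - a * (l^2 * q) := by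
      rw [← hσe]
      simp only [hσ_def, hw_def, hs_def]
      ring
    have h2' : a * (l^2 * q) = s := by
      rw [ha_def]
      field_simp
    rw [h1', h2', sub_self]
  -- explicit form of mulVec
  have hMv : ∀ z : Fin 3 → ℝ, M.mulVec z = ![z 0 + 2*z 1, z 0 + 2*z 2, z 0] := by
    intro z
    funext i
    rw [hM]
    fin_cases i <;>
      simp [Matrix.mulVec, dotProduct, Fin.sum_univ_three,
        Matrix.cons_val_zero, Matrix.cons_val_one, Matrix.head_cons] <;> ring
  -- key algebraic facts about M
  have hMe : M.mulVec e = l • e := by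
    rw [hMv]
    funext i
    fin_cases i
    · simp [he_def]
      linear_combination -hl
    · simp [he_def]
      ring
    · simp [he_def]
      ring
  have hleft : ∀ z : Fin 3 → ℝ, σ (M.mulVec z) = l * σ z := by
    intro z
    rw [hMv]
    simp only [hσ_def, Matrix.cons_val_zero, Matrix.cons_val_one, Matrix.head_cons,
      Matrix.cons_val_two, Matrix.tail_cons]
    linear_combination (-(z 0)) * hl
  have hNz : ∀ z : Fin 3 → ℝ, σ z = 0 →
      M.mulVec (M.mulVec z) = (1-l) • M.mulVec z - p • z := by
    intro z hz
    simp only [hσ_def] at hz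
    rw [hMv z, hMv]
    funext i
    fin_cases i <;>
      simp [Pi.sub_apply, Pi.smul_apply, smul_eq_mul, hp_def]
    · linear_combination hz
    · linear_combination ((l-1)/2) * hz - (z 0 / 2) * hl
    · apply mul_left_cancel₀ hlne
      linear_combination hz + z 2 * hl
  -- the remainder sequence
  set W : ℕ → Fin 3 → ℝ := fun k => (M^k).mulVec w with hW_def
  have hW0 : W 0 = w := by simp [hW_def, Matrix.one_mulVec]
  have hWs : ∀ k, W (k+1) = M.mulVec (W k) := by
    intro k
    simp only [hW_def, Matrix.mulVec_mulVec, ← pow_succ']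
  have hσW : ∀ k, σ (W k) = 0 := by
    intro k
    induction k with
    | zero => rw [hW0]; exact hσw
    | succ n ih => rw [hWs, hleft, ih, mul_zero]
  have hrec : ∀ k, W (k+2) = (1-l) • W (k+1) - p • W k := by
    intro k
    have := hNz (W k) (hσW k)
    rw [hWs (k+1), hWs k, this]
  -- eigenvector evolution
  have hMke : ∀ k, (M^k).mulVec e = l^k • e := by
    intro k
    induction k with
    | zero => simp [Matrix.one_mulVec]
    | succ n ih =>
        rw [pow_succ', ← Matrix.mulVec_mulVec, ih, Matrix.mulVec_smul, hMe,
          smul_smul, ← pow_succ]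
  have hdecomp : ∀ k, (M^k).mulVec u = (a * l^k) • e + W k := by
    intro k
    have hu_eq : u = a • e + w := by
      funext i; simp [hw_def]
    rw [hW_def]
    conv_lhs => rw [hu_eq]
    rw [Matrix.mulVec_add, Matrix.mulVec_smul, hMke, smul_smul]
  -- per–coordinate convergence of the remainder
  have hWlim : ∀ i, Filter.Tendsto (fun k => (1 / l^k) * W k i) Filter.atTop (nhds 0) := by
    intro i
    set x : ℕ → ℝ := fun k => W k i with hx_def
    have hxrec : ∀ k, x (k+2) = (1-l) * x (k+1) - p * x k := by
      intro k
      have := congrFun (hrec k) i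
      simpa [hx_def] using this
    set E : ℕ → ℝ := fun k => x (k+1)^2 + (l-1)*x k*x (k+1) + p*x k^2 with hE_def
    have hEstep : ∀ k, E (k+1) = p * E k := by
      intro k
      simp only [hE_def, hxrec k]
      ring
    have hEk : ∀ k, E k = p^k * E 0 := by
      intro k
      induction k with
      | zero => simp
      | succ n ih => rw [hEstep, ih, pow_succ]; ring
    have hE0 : 0 ≤ E 0 := by
      have h4 : 0 ≤ (2*x 1 + (l-1)*x 0)^2 + (4*p - (l-1)^2) * x 0^2 := by positivity
      simp only [hE_def]
      nlinarith
    set C : ℝ := 4 * E 0 / (4*p - (l-1)^2) with hC_def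
    have hC : 0 ≤ C := div_nonneg (by linarith) (le_of_lt hdisc)
    have hxbound : ∀ k, x k ^ 2 ≤ C * p^k := by
      intro k
      have hEk' := hEk k
      have h4 : 0 ≤ (2*x (k+1) + (l-1)*x k)^2 := sq_nonneg _
      have key : (4*p - (l-1)^2) * (x k^2) ≤ 4 * (p^k * E 0) := by
        rw [← hEk']; simp only [hE_def]; nlinarith
      have hne : (4*p - (l-1)^2) ≠ 0 := ne_of_gt hdisc
      calc x k ^ 2 = (4*p - (l-1)^2) * (x k^2) / (4*p - (l-1)^2) := by
            field_simp
        _ ≤ 4 * (p^k * E 0) / (4*p - (l-1)^2) := by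
            gcongr
        _ = C * p^k := by rw [hC_def]; ring
    set r : ℝ := Real.sqrt p / l with hr_def
    have hr0 : 0 ≤ r := by positivity
    have hr1 : r < 1 := by
      rw [hr_def, div_lt_one hl0]
      have : Real.sqrt p < Real.sqrt (l^2) := by
        apply Real.sqrt_lt_sqrt (le_of_lt hp) hpl2
      rwa [Real.sqrt_sq (le_of_lt hl0)] at this
    have habs : ∀ k, |(1 / l^k) * x k| ≤ Real.sqrt C * r^k := by
      intro k
      have h1' : |x k| ≤ Real.sqrt C * Real.sqrt p ^ k := by
        have := hxbound k
        have h2' : Real.sqrt (x k ^ 2) ≤ Real.sqrt (C * p^k) := Real.sqrt_le_sqrt this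
        rwa [Real.sqrt_sq_eq_abs, Real.sqrt_mul hC, sqrt_pow_aux p (le_of_lt hp)] at h2'
      have hlk : (0:ℝ) < l^k := by positivity
      have hstep : |(1 / l^k) * x k| = |x k| / l^k := by
        rw [abs_mul, abs_of_pos (by positivity : (0:ℝ) < 1 / l^k)]
        ring
      have hrk : Real.sqrt C * r^k = (Real.sqrt C * Real.sqrt p ^ k) / l^k := by
        rw [hr_def, div_pow]
        ring
      rw [hstep, hrk]
      gcongr
    have hgeo : Filter.Tendsto (fun k : ℕ => Real.sqrt C * r^k) Filter.atTop (nhds 0) := by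
      have h' := (tendsto_pow_atTop_nhds_zero_of_lt_one hr0 hr1).const_mul (Real.sqrt C)
      rw [mul_zero] at h'
      exact h'
    exact squeeze_zero_norm
      (fun k => by rw [Real.norm_eq_abs]; exact habs k) hgeo
  -- assemble
  have hl2 : (0:ℝ) < l - 2 := by linarith
  refine ⟨s / (q * (l-2)), div_pos hs (mul_pos hq hl2), ?_⟩
  set c : ℝ := s / (q * (l-2)) with hc_def
  have hkey : c * (l-2) = a * l^2 := by
    rw [hc_def, ha_def]
    field_simp
  have hcv : c • v = fun i => a * e i := by
    funext i
    rw [hv]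
    fin_cases i <;>
      simp [he_def]
    · exact hkey
    · rw [mul_div_assoc', div_eq_iff (pow_ne_zero 2 hlne)]
      linear_combination (l+2) * hkey
    · rw [mul_div_assoc', div_eq_iff hlne]
      linear_combination hkey
  rw [hcv]
  rw [tendsto_pi_nhds]
  intro i
  have heq : (fun k : ℕ => ((1 / l ^ k) • (M ^ k).mulVec u) i)
      = fun k : ℕ => a * e i + (1 / l^k) * W k i := by
    funext k
    have hlk : l^k ≠ 0 := pow_ne_zero k hlne
    rw [Pi.smul_apply, smul_eq_mul, hdecomp k]
    simp only [Pi.add_apply, Pi.smul_apply, smul_eq_mul]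
    field_simp
  rw [heq]
  have hfin := (hWlim i).const_add (a * e i)
  rw [add_zero] at hfin
  exact hfin
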